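/- The number of non-crossing pairs of Dyck paths of length 2n (pairs (P,Q) of Dyck paths with P weakly below Q at every abscissa) equals C_n·C_{n+2} − C_{n+1}², where C_n is the n-th Catalan number. -/

import Mathlib

/-- Height after `x` steps of a path with steps `(1,1)` (`true`) and `(1,-1)` (`false`). -/
def height (w : List Bool) (x : ℕ) : ℤ :=
  ((w.take x).count true : ℤ) - ((w.take x).count false : ℤ)

/-- `w` is a Dyck path of length `2n`: `n` up steps, `n` down steps, never below the axis. -/
def IsDyck (n : ℕ) (w : List Bool) : Prop :=
  w.length = 2 * n ∧ w.count true = n ∧ ∀ x : ℕ, 0 ≤ height w x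

lemma count_true_add_count_false (w : List Bool) :
    w.count true + w.count false = w.length := by
  induction w with
  | nil => simp
  | cons a l ih => cases a <;> simp [List.count_cons] <;> omega

@[simp] lemma height_zero (w : List Bool) : height w 0 = 0 := by simp [height]

lemma height_of_le (w : List Bool) {x : ℕ} (h : w.length ≤ x) :
    height w x = height w w.length := by
  simp [height, List.take_of_length_le h, List.take_length]

lemma height_add (w : List Bool) (k x : ℕ) :
    height w (k + x) = height w k + height (w.drop k) x := by
  have h : w.take (k + x) = w.take k ++ (w.drop k).take x := List.take_add ..
  simp [height, h, List.count_append]; ring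

lemma height_drop (w : List Bool) (k x : ℕ) :
    height (w.drop k) x = height w (k + x) - height w k := by
  rw [height_add]; ring

lemma height_append (u v : List Bool) (x : ℕ) :
    height (u ++ v) x = height u x + height v (x - u.length) := by
  have h : (u ++ v).take x = u.take x ++ v.take (x - u.length) :=
    List.take_append
  simp [height, h, List.count_append]; ring

lemma height_take (w : List Bool) (k x : ℕ) :
    height (w.take k) x = height w (min x k) := by
  simp [height, List.take_take]

lemma two_mul_count_true (w : List Bool) (x : ℕ) :
    2 * ((w.take x).count true : ℤ) = ((w.take x).length : ℤ) + height w x := by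
  have := count_true_add_count_false (w.take x)
  simp only [height]; omega

lemma height_length (w : List Bool) :
    height w w.length = 2 * (w.count true : ℤ) - w.length := by
  have := count_true_add_count_false w
  simp only [height, List.take_length]; omega

lemma height_step (w : List Bool) (x : ℕ) :
    height w x - 1 ≤ height w (x + 1) ∧ height w (x + 1) ≤ height w x + 1 := by
  have h := height_add w x 1
  have h1 := count_true_add_count_false ((w.drop x).take 1)
  have h2 : ((w.drop x).take 1).length ≤ 1 := by
    simpa using List.length_take_le 1 (w.drop x)
  have h3 : height (w.drop x) 1 = (((w.drop x).take 1).count true : ℤ)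
      - ((w.drop x).take 1).count false := rfl
  constructor <;> omega

lemma height_parity (w : List Bool) (x : ℕ) (hx : x ≤ w.length) :
    2 ∣ (height w x + x) := by
  have := two_mul_count_true w x
  have hl : (w.take x).length = x := by simp [hx]
  rw [hl] at this
  exact ⟨(w.take x).count true, by omega⟩

namespace IsDyck

lemma nonneg {n : ℕ} {w : List Bool} (h : IsDyck n w) (x : ℕ) : 0 ≤ height w x := h.2.2 x

lemma len {n : ℕ} {w : List Bool} (h : IsDyck n w) : w.length = 2 * n := h.1

lemma height_end {n : ℕ} {w : List Bool} (h : IsDyck n w) : height w (2 * n) = 0 := by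
  rw [← h.1, height_length, h.2.1, h.1]; push_cast; ring

lemma of_end {n : ℕ} {w : List Bool} (hl : w.length = 2 * n)
    (he : height w (2 * n) = 0) (hn : ∀ x, 0 ≤ height w x) : IsDyck n w := by
  refine ⟨hl, ?_, hn⟩
  have h2 := height_length w
  rw [hl] at h2
  rw [h2] at he
  omega

end IsDyck

/-- difference stays positive if it never hits zero -/
lemma diff_pos {P1 P2 : List Bool} {N : ℕ}
    (h1 : ∀ x, 0 ≤ height P1 x) (h2 : ∀ x, 0 ≤ height P2 x)
    (hl1 : N ≤ P1.length) (hl2 : N + 2 ≤ P2.length)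
    (hne : ∀ x ≤ N, height P2 (x + 2) ≠ height P1 x) :
    ∀ x ≤ N, height P1 x + 2 ≤ height P2 (x + 2) := by
  intro x
  induction x with
  | zero =>
    intro _
    show height P1 0 + 2 ≤ height P2 2
    have hp := height_parity P2 2 (by omega)
    have hne0 : height P2 2 ≠ height P1 0 := hne 0 (by omega)
    have h0 := h1 0
    have hP2 : 0 ≤ height P2 2 := h2 2
    have h00 : height P1 0 = 0 := height_zero P1
    omega
  | succ x ih =>
    intro hx
    show height P1 (x + 1) + 2 ≤ height P2 (x + 3)
    have hxx := ih (by omega)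
    have hs1 := height_step P1 x
    have hs2 : height P2 (x + 2) - 1 ≤ height P2 (x + 3) ∧
        height P2 (x + 3) ≤ height P2 (x + 2) + 1 := height_step P2 (x + 2)
    have hp1 := height_parity P1 (x + 1) (by omega)
    have hp2 := height_parity P2 (x + 3) (by omega)
    have hne' : height P2 (x + 3) ≠ height P1 (x + 1) := hne (x + 1) hx
    omega

/-! ### The tail-swap -/

def swapA (C D : List Bool) (x0 : ℕ) : List Bool := C.take x0 ++ D.drop (x0 + 2)
def swapB (C D : List Bool) (x0 : ℕ) : List Bool := D.take (x0 + 2) ++ C.drop x0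

lemma length_swapA {C D : List Bool} {x0 : ℕ} (h1 : x0 ≤ C.length) (h2 : x0 + 2 ≤ D.length) :
    (swapA C D x0).length = D.length - 2 := by
  simp [swapA]; omega

lemma length_swapB {C D : List Bool} {x0 : ℕ} (h1 : x0 ≤ C.length) (h2 : x0 + 2 ≤ D.length) :
    (swapB C D x0).length = C.length + 2 := by
  simp [swapB]; omega

lemma height_swapA_le {C D : List Bool} {x0 x : ℕ} (h1 : x0 ≤ C.length) (hx : x ≤ x0) :
    height (swapA C D x0) x = height C x := by
  rw [swapA, height_append, height_take, List.length_take]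
  have e1 : min x x0 = x := by omega
  have e2 : min x0 C.length = x0 := by omega
  have e3 : x - min x0 C.length = 0 := by omega
  rw [e1, e3, height_zero, add_zero]

lemma height_swapA_ge {C D : List Bool} {x0 x : ℕ} (h1 : x0 ≤ C.length)
    (hm : height D (x0 + 2) = height C x0) (hx : x0 ≤ x) :
    height (swapA C D x0) x = height D (x + 2) := by
  rw [swapA, height_append, height_take, List.length_take, height_drop]
  have e1 : min x x0 = x0 := by omega
  have e2 : x - min x0 C.length = x - x0 := by omega
  have e3 : x0 + 2 + (x - x0) = x + 2 := by omega
  rw [e1, e2, e3, hm]; ring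

lemma height_swapB_le {C D : List Bool} {x0 x : ℕ} (h2 : x0 + 2 ≤ D.length) (hx : x ≤ x0 + 2) :
    height (swapB C D x0) x = height D x := by
  rw [swapB, height_append, height_take, List.length_take]
  have e1 : min x (x0 + 2) = x := by omega
  have e3 : x - min (x0 + 2) D.length = 0 := by omega
  rw [e1, e3, height_zero, add_zero]

lemma height_swapB_ge {C D : List Bool} {x0 x : ℕ} (h2 : x0 + 2 ≤ D.length)
    (hm : height D (x0 + 2) = height C x0) (hx : x0 + 2 ≤ x) :
    height (swapB C D x0) x = height C (x - 2) := by
  rw [swapB, height_append, height_take, List.length_take, height_drop]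
  have e1 : min x (x0 + 2) = x0 + 2 := by omega
  have e2 : x - min (x0 + 2) D.length = x - (x0 + 2) := by omega
  have e3 : x0 + (x - (x0 + 2)) = x - 2 := by omega
  rw [e1, e2, e3, hm]; ring

lemma swapA_isDyck {a c : ℕ} {C D : List Bool} {x0 : ℕ}
    (hC : IsDyck a C) (hD : IsDyck (c + 1) D)
    (hm : height D (x0 + 2) = height C x0) (hx1 : x0 ≤ 2 * a) (hx2 : x0 ≤ 2 * c) :
    IsDyck c (swapA C D x0) := by
  have h1 : x0 ≤ C.length := by rw [hC.len]; omega
  have h2 : x0 + 2 ≤ D.length := by rw [hD.len]; omega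
  refine IsDyck.of_end (by rw [length_swapA h1 h2, hD.len]; omega) ?_ ?_
  · rw [height_swapA_ge h1 hm (by omega)]
    have : 2 * c + 2 = 2 * (c + 1) := by omega
    rw [this, hD.height_end]
  · intro x
    rcases le_or_gt x x0 with h | h
    · rw [height_swapA_le h1 h]; exact hC.nonneg x
    · rw [height_swapA_ge h1 hm (by omega)]; exact hD.nonneg (x + 2)

lemma swapB_isDyck {a c : ℕ} {C D : List Bool} {x0 : ℕ}
    (hC : IsDyck a C) (hD : IsDyck (c + 1) D)
    (hm : height D (x0 + 2) = height C x0) (hx1 : x0 ≤ 2 * a) (hx2 : x0 ≤ 2 * c) :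
    IsDyck (a + 1) (swapB C D x0) := by
  have h1 : x0 ≤ C.length := by rw [hC.len]; omega
  have h2 : x0 + 2 ≤ D.length := by rw [hD.len]; omega
  refine IsDyck.of_end (by rw [length_swapB h1 h2, hC.len]; omega) ?_ ?_
  · have e : 2 * (a + 1) = 2 * a + 2 := by omega
    rw [e, height_swapB_ge h2 hm (by omega)]
    have e2 : 2 * a + 2 - 2 = 2 * a := by omega
    rw [e2, hC.height_end]
  · intro x
    rcases le_or_gt x (x0 + 2) with h | h
    · rw [height_swapB_le h2 h]; exact hD.nonneg x
    · rw [height_swapB_ge h2 hm (by omega)]; exact hC.nonneg (x - 2)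

/-- reconstruction of the original pair from the swapped pair -/
lemma swap_swap_left {C D : List Bool} {x0 : ℕ} (h1 : x0 ≤ C.length) (h2 : x0 + 2 ≤ D.length) :
    swapA (swapA C D x0) (swapB C D x0) x0 = C := by
  unfold swapA swapB
  rw [List.take_append, List.drop_append]
  rw [List.length_take, List.length_take]
  have e1 : min x0 C.length = x0 := by omega
  have e2 : min (x0 + 2) D.length = x0 + 2 := by omega
  rw [e1, e2]
  simp [List.take_take, List.drop_take, List.take_append_drop]

lemma swap_swap_right {C D : List Bool} {x0 : ℕ} (h1 : x0 ≤ C.length) (h2 : x0 + 2 ≤ D.length) :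
    swapB (swapA C D x0) (swapB C D x0) x0 = D := by
  unfold swapA swapB
  rw [List.take_append, List.drop_append]
  rw [List.length_take, List.length_take]
  have e1 : min x0 C.length = x0 := by omega
  have e2 : min (x0 + 2) D.length = x0 + 2 := by omega
  rw [e1, e2]
  simp [List.take_take, List.drop_take, List.take_append_drop]

/-! ### small helpers -/

lemma height_cons (a : Bool) (w : List Bool) (x : ℕ) :
    height (a :: w) (x + 1) = (bif a then 1 else -1) + height w x := by
  cases a <;> simp [height, List.take_succ_cons, List.count_cons] <;> push_cast <;> ring

lemma height_le (w : List Bool) (x : ℕ) : height w x ≤ x ∧ -(x : ℤ) ≤ height w x := by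
  have h1 := count_true_add_count_false (w.take x)
  have h2 : (w.take x).length ≤ x := by simpa using List.length_take_le x w
  simp only [height]
  omega

lemma eq_two_true {E : List Bool} (hl : E.length = 2) (hc : E.count true = 2) :
    E = [true, true] := by
  match E, hl with
  | [a, b], _ =>
    cases a <;> cases b <;> simp_all [List.count_cons]

lemma eq_two_false {E : List Bool} (hl : E.length = 2) (hc : E.count true = 0) :
    E = [false, false] := by
  match E, hl with
  | [a, b], _ =>
    cases a <;> cases b <;> simp_all [List.count_cons]

/-! ### the embedding `Q ↦ [true, true] ++ Q ++ [false, false]` -/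

def embed (Q : List Bool) : List Bool := [true, true] ++ (Q ++ [false, false])

lemma embed_injective : Function.Injective embed := by
  intro a b h
  simpa [embed] using h

lemma height_ff (y : ℕ) : height [false, false] y = -(min y 2 : ℕ) := by
  match y with
  | 0 => simp
  | 1 => decide
  | (y + 2) =>
    rw [height_of_le _ (by simp)]
    simp [show min (y+2) 2 = 2 by omega]
    decide

lemma height_tt (y : ℕ) : height [true, true] y = (min y 2 : ℕ) := by
  match y with
  | 0 => simp
  | 1 => decide
  | (y + 2) =>
    rw [height_of_le _ (by simp)]
    simp [show min (y+2) 2 = 2 by omega]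
    decide

lemma height_embed (Q : List Bool) (x : ℕ) :
    height (embed Q) (x + 2) = 2 + height Q x - (min (x - Q.length) 2 : ℕ) := by
  rw [embed, height_append, height_append, height_tt, height_ff]
  have e1 : min (x + 2) 2 = 2 := by omega
  have e2 : x + 2 - ([true, true] : List Bool).length = x := by simp
  rw [e2, e1]
  push_cast
  ring

lemma embed_isDyck {n : ℕ} {Q : List Bool} (hQ : IsDyck n Q) : IsDyck (n + 2) (embed Q) := by
  have hlen : (embed Q).length = 2 * (n + 2) := by simp [embed, hQ.len]; omega
  refine IsDyck.of_end hlen ?_ ?_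
  · have e : 2 * (n + 2) = 2 * n + 2 + 2 := by omega
    rw [e, height_embed]
    have h1 : height Q (2 * n + 2) = 0 := by
      rw [height_of_le _ (by rw [hQ.len]; omega), hQ.len]
      exact hQ.height_end
    rw [h1, hQ.len]
    simp [show 2 * n + 2 - 2 * n = 2 by omega]
  · intro x
    match x with
    | 0 => simp
    | 1 =>
      have h1 : height (embed Q) 1 = 1 := by
        show height (true :: true :: (Q ++ [false, false])) 1 = 1
        rw [show (1:ℕ) = 0 + 1 from rfl, height_cons]
        simp
      omega
    | (x + 2) =>
      rw [height_embed]
      have := hQ.nonneg x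
      have : (min (x - Q.length) 2 : ℕ) ≤ 2 := by omega
      have := hQ.nonneg x
      omega

lemma height_embed_low {Q : List Bool} {n : ℕ} (hl : Q.length = 2 * n) {x : ℕ} (hx : x ≤ 2 * n) :
    height (embed Q) (x + 2) = 2 + height Q x := by
  rw [height_embed, hl]
  simp [show x - 2 * n = 0 by omega]

/-! ### the meeting index and the tail-swap involution -/

def meetSet (C D : List Bool) : Set ℕ := {x | height D (x + 2) = height C x}

noncomputable def meetIdx (C D : List Bool) : ℕ := sInf (meetSet C D)

noncomputable def phi (p : List Bool × List Bool) : List Bool × List Bool :=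
  (swapA p.1 p.2 (meetIdx p.1 p.2), swapB p.1 p.2 (meetIdx p.1 p.2))

lemma meetSet_nonempty {a : ℕ} {C D : List Bool} (hC : IsDyck a C) (hD : IsDyck (a + 2) D) :
    (2 * a + 2) ∈ meetSet C D := by
  have h1 : height D (2 * a + 2 + 2) = 0 := by
    have e : 2 * a + 2 + 2 = 2 * (a + 2) := by omega
    rw [e]; exact hD.height_end
  have h2 : height C (2 * a + 2) = 0 := by
    rw [height_of_le _ (by rw [hC.len]; omega), hC.len]; exact hC.height_end
  simp [meetSet, h1, h2]

lemma meetIdx_spec {C D : List Bool} (h : (meetSet C D).Nonempty) :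
    height D (meetIdx C D + 2) = height C (meetIdx C D) :=
  Nat.sInf_mem h

lemma meetIdx_le {C D : List Bool} {x : ℕ} (h : x ∈ meetSet C D) : meetIdx C D ≤ x :=
  Nat.sInf_le h

lemma not_meet_of_lt {C D : List Bool} {x : ℕ} (h : x < meetIdx C D) : x ∉ meetSet C D :=
  Nat.notMem_of_lt_sInf h

/-- the swapped pair has the same meeting index -/
lemma meetIdx_swap {C D : List Bool} (hne : (meetSet C D).Nonempty)
    (h1 : meetIdx C D ≤ C.length) (h2 : meetIdx C D + 2 ≤ D.length) :
    meetIdx (swapA C D (meetIdx C D)) (swapB C D (meetIdx C D)) = meetIdx C D := by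
  set x0 := meetIdx C D with hx0
  have hm : height D (x0 + 2) = height C x0 := meetIdx_spec hne
  have hmem : x0 ∈ meetSet (swapA C D x0) (swapB C D x0) := by
    show height (swapB C D x0) (x0 + 2) = height (swapA C D x0) x0
    rw [height_swapB_le h2 le_rfl, height_swapA_le h1 le_rfl, hm]
  have hle : meetIdx (swapA C D x0) (swapB C D x0) ≤ x0 := meetIdx_le hmem
  rcases eq_or_lt_of_le hle with h | h
  · exact h
  · exfalso
    set y := meetIdx (swapA C D x0) (swapB C D x0) with hy
    have hymem : y ∈ meetSet (swapA C D x0) (swapB C D x0) := Nat.sInf_mem ⟨x0, hmem⟩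
    have : y ∈ meetSet C D := by
      have e1 : height (swapB C D x0) (y + 2) = height D (y + 2) :=
        height_swapB_le h2 (by omega)
      have e2 : height (swapA C D x0) y = height C y := height_swapA_le h1 (by omega)
      show height D (y + 2) = height C y
      rw [← e1, ← e2]; exact hymem
    exact absurd (meetIdx_le this) (by omega)

/-- on V-pairs the meeting index is at most 2n -/
lemma meetIdx_le_of_V {n : ℕ} {A B : List Bool} (hA : IsDyck (n + 1) A) (hB : IsDyck (n + 1) B) :
    meetIdx A B ≤ 2 * n ∧ (meetSet A B).Nonempty := by
  have : ∃ x ≤ 2 * n, x ∈ meetSet A B := by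
    by_contra hcon
    push_neg at hcon
    have hne : ∀ x ≤ 2 * n, height B (x + 2) ≠ height A x := fun x hx => hcon x hx
    have := diff_pos hA.nonneg hB.nonneg (by rw [hA.len]; omega) (by rw [hB.len]; omega)
      hne (2 * n) le_rfl
    have hB0 : height B (2 * n + 2) = 0 := by
      have e : 2 * n + 2 = 2 * (n + 1) := by omega
      rw [e]; exact hB.height_end
    have := hA.nonneg (2 * n)
    omega
  obtain ⟨x, hx, hmem⟩ := this
  exact ⟨le_trans (meetIdx_le hmem) hx, ⟨x, hmem⟩⟩

/-- gap characterization on U-pairs -/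
lemma gap_iff {n : ℕ} {C D : List Bool} (hC : IsDyck n C) (hD : IsDyck (n + 2) D) :
    (∀ x ≤ 2 * n, height C x + 2 ≤ height D (x + 2)) ↔ 2 * n < meetIdx C D := by
  constructor
  · intro hgap
    by_contra hcon
    push_neg at hcon
    have hm := meetIdx_spec ⟨_, meetSet_nonempty hC hD⟩
    have := hgap _ hcon
    omega
  · intro hlt
    have hne : ∀ x ≤ 2 * n, height D (x + 2) ≠ height C x := by
      intro x hx hmem
      exact absurd (meetIdx_le hmem) (by omega)
    exact diff_pos hC.nonneg hD.nonneg (by rw [hC.len]) (by rw [hD.len]; omega) hne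

/-! ### counting Dyck paths via `DyckWord` -/

open DyckStep in
def toStep : Bool → DyckStep := fun b => bif b then U else D

open DyckStep in
def toBool : DyckStep → Bool := fun s => match s with | U => true | D => false

lemma toStep_injective : Function.Injective toStep := by decide

lemma toBool_toStep (b : Bool) : toBool (toStep b) = b := by cases b <;> rfl

lemma toStep_toBool (s : DyckStep) : toStep (toBool s) = s := by cases s <;> rfl

open DyckStep in
noncomputable def dyckEquiv (m : ℕ) :
    {w : List Bool // IsDyck m w} ≃ {p : DyckWord // p.semilength = m} where
  toFun w := ⟨⟨w.1.map toStep, by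
      rw [show U = toStep true from rfl, show D = toStep false from rfl,
        List.count_map_of_injective _ _ toStep_injective,
        List.count_map_of_injective _ _ toStep_injective]
      have h1 := w.2.1; have h2 := w.2.2.1
      have := count_true_add_count_false w.1
      omega, by
      intro i
      rw [← List.map_take, show U = toStep true from rfl, show D = toStep false from rfl,
        List.count_map_of_injective _ _ toStep_injective,
        List.count_map_of_injective _ _ toStep_injective]
      have := w.2.2.2 i
      simp only [height] at this
      omega⟩, by
      show (w.1.map toStep).count U = m
      rw [show U = toStep true from rfl, List.count_map_of_injective _ _ toStep_injective]
      exact w.2.2.1⟩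
  invFun p := ⟨p.1.toList.map toBool, by
      have hlen : p.1.toList.length = 2 * m := by
        rw [← p.1.two_mul_semilength_eq_length, p.2]
      have hcount : p.1.toList.count U = m := p.2
      refine ⟨by simpa using hlen, ?_, ?_⟩
      · rw [show true = toBool U from rfl, List.count_map_of_injective]
        · exact hcount
        · intro a b hab; rw [← toStep_toBool a, hab, toStep_toBool]
      · intro x
        have hd := p.1.count_D_le_count_U x
        simp only [height]
        rw [← List.map_take, show true = toBool U from rfl, show false = toBool D from rfl,
          List.count_map_of_injective, List.count_map_of_injective]
        · omega
        all_goals (intro a b hab; rw [← toStep_toBool a, hab, toStep_toBool])⟩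
  left_inv w := by
    ext1
    show (w.1.map toStep).map toBool = w.1
    rw [List.map_map]
    simp [Function.comp_def, toBool_toStep]
  right_inv p := by
    ext1; ext1
    show ((p.1.toList.map toBool).map toStep) = p.1.toList
    rw [List.map_map]
    simp [Function.comp_def, toStep_toBool]

lemma ncard_dyck (m : ℕ) : {w : List Bool | IsDyck m w}.ncard = catalan m := by
  rw [← Nat.card_coe_set_eq]
  rw [show {w : List Bool | IsDyck m w} = Set.range (Subtype.val : {w // IsDyck m w} → _) by
    ext w; simp [Set.range], Nat.card_range_of_injective Subtype.val_injective,
    Nat.card_congr (dyckEquiv m), Nat.card_eq_fintype_card,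
    DyckWord.card_dyckWord_semilength_eq_catalan]

lemma finite_dyck (m : ℕ) : {w : List Bool | IsDyck m w}.Finite :=
  (List.finite_length_eq Bool (2 * m)).subset fun w hw => hw.1

lemma dyckPairs_eq (a b : ℕ) :
    {p : List Bool × List Bool | IsDyck a p.1 ∧ IsDyck b p.2} =
      {w | IsDyck a w} ×ˢ {w | IsDyck b w} := rfl

lemma finite_dyckPairs (a b : ℕ) :
    {p : List Bool × List Bool | IsDyck a p.1 ∧ IsDyck b p.2}.Finite := by
  rw [dyckPairs_eq]; exact (finite_dyck a).prod (finite_dyck b)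

lemma ncard_dyckPairs (a b : ℕ) :
    {p : List Bool × List Bool | IsDyck a p.1 ∧ IsDyck b p.2}.ncard =
      catalan a * catalan b := by
  rw [dyckPairs_eq, ← Nat.card_coe_set_eq,
    Nat.card_congr (Equiv.Set.prod _ _), Nat.card_prod,
    Nat.card_coe_set_eq, Nat.card_coe_set_eq, ncard_dyck, ncard_dyck]

/-! ### surgery: every U-pair with a gap comes from a noncrossing pair -/

lemma surgery {n : ℕ} {C D : List Bool} (hC : IsDyck n C) (hD : IsDyck (n + 2) D)
    (hgap : ∀ x ≤ 2 * n, height C x + 2 ≤ height D (x + 2)) :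
    ∃ Q, IsDyck n Q ∧ (∀ x ≤ 2 * n, height C x ≤ height Q x) ∧ embed Q = D := by
  have hDlen : D.length = 2 * n + 4 := by rw [hD.len]; omega
  have hDend : height D (2 * n + 4) = 0 := by
    have e : 2 * n + 4 = 2 * (n + 2) := by omega
    rw [e]; exact hD.height_end
  have hCend : height C (2 * n) = 0 := hC.height_end
  -- the height at 2 is exactly 2
  have hD2 : height D 2 = 2 := by
    have hlow := hgap 0 (by omega)
    have hup := (height_le D 2).1
    simp only [height_zero] at hlow
    have : height D (0 + 2) = height D 2 := rfl
    omega
  -- the height at 2n+2 is exactly 2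
  have hDtop : height D (2 * n + 2) = 2 := by
    have hlow := hgap (2 * n) le_rfl
    rw [hCend] at hlow
    have hdrop := height_drop D (2 * n + 2) 2
    rw [show 2 * n + 2 + 2 = 2 * n + 4 from rfl, hDend] at hdrop
    have := (height_le (D.drop (2 * n + 2)) 2).2
    omega
  -- first two steps are up
  have htake : D.take 2 = [true, true] := by
    have hlen2 : (D.take 2).length = 2 := by simp; omega
    refine eq_two_true hlen2 ?_
    have h2 := two_mul_count_true D 2
    rw [hlen2, hD2] at h2
    omega
  -- last two steps are down
  have hdrop2 : D.drop (2 * n + 2) = [false, false] := by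
    set E := D.drop (2 * n + 2) with hE
    have hlenE : E.length = 2 := by simp [hE]; omega
    refine eq_two_false hlenE ?_
    have h2 := two_mul_count_true E 2
    have htE : E.take 2 = E := List.take_of_length_le (by omega)
    rw [htE, hlenE] at h2
    have hhE : height E 2 = -2 := by
      rw [hE, height_drop, show 2 * n + 2 + 2 = 2 * n + 4 from rfl, hDend, hDtop]
      ring
    rw [hhE] at h2
    omega
  set Q := (D.drop 2).take (2 * n) with hQ
  have hQlen : Q.length = 2 * n := by simp [hQ]; omega
  have hQheight : ∀ y, height Q y = height D (2 + min y (2 * n)) - 2 := by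
    intro y
    rw [hQ, height_take, height_drop, hD2]
  have hQDyck : IsDyck n Q := by
    refine IsDyck.of_end hQlen ?_ ?_
    · rw [hQheight, show 2 + min (2 * n) (2 * n) = 2 * n + 2 by omega, hDtop]; ring
    · intro y
      rw [hQheight]
      have hm : min y (2 * n) ≤ 2 * n := by omega
      have hg := hgap _ hm
      have hcn := hC.nonneg (min y (2 * n))
      have e : (2 : ℕ) + min y (2 * n) = min y (2 * n) + 2 := by omega
      rw [e]
      omega
  refine ⟨Q, hQDyck, ?_, ?_⟩
  · intro x hx
    rw [hQheight, show min x (2 * n) = x by omega,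
      show (2 + x) = x + 2 by omega]
    have := hgap x hx
    omega
  · rw [embed]
    have hsplit : D = D.take 2 ++ D.drop 2 := (List.take_append_drop 2 D).symm
    have hsplit2 : D.drop 2 = Q ++ (D.drop 2).drop (2 * n) :=
      (List.take_append_drop (2 * n) (D.drop 2)).symm
    have hdd : (D.drop 2).drop (2 * n) = [false, false] := by
      rw [List.drop_drop, show 2 + 2 * n = 2 * n + 2 by omega]
      exact hdrop2
    rw [hdd] at hsplit2
    conv_rhs => rw [hsplit, hsplit2, htake]

/-! ### the bijection between meeting U-pairs and V-pairs -/

section Bij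

variable (n : ℕ)

noncomputable def Uset : Set (List Bool × List Bool) :=
  {p | IsDyck n p.1 ∧ IsDyck (n + 2) p.2}

noncomputable def Xset : Set (List Bool × List Bool) :=
  {p | (IsDyck n p.1 ∧ IsDyck (n + 2) p.2) ∧ meetIdx p.1 p.2 ≤ 2 * n}

noncomputable def Vset : Set (List Bool × List Bool) :=
  {p | IsDyck (n + 1) p.1 ∧ IsDyck (n + 1) p.2}

lemma phi_bijOn : Set.BijOn phi (Xset n) (Vset n) := by
  have hmapsXV : Set.MapsTo phi (Xset n) (Vset n) := by
    rintro ⟨C, D⟩ ⟨⟨hC, hD⟩, hle⟩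
    replace hle : meetIdx C D ≤ 2 * n := hle
    have hne : (meetSet C D).Nonempty := ⟨_, meetSet_nonempty hC hD⟩
    have hm := meetIdx_spec hne
    show IsDyck (n + 1) (swapA C D (meetIdx C D)) ∧ IsDyck (n + 1) (swapB C D (meetIdx C D))
    exact ⟨swapA_isDyck (c := n + 1) hC hD hm hle (by omega),
      swapB_isDyck (c := n + 1) hC hD hm hle (by omega)⟩
  have hmapsVX : Set.MapsTo phi (Vset n) (Xset n) := by
    rintro ⟨A, B⟩ ⟨hA, hB⟩
    obtain ⟨hle, hne⟩ := meetIdx_le_of_V hA hB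
    replace hle : meetIdx A B ≤ 2 * n := hle
    replace hne : (meetSet A B).Nonempty := hne
    have hm : height B (meetIdx A B + 2) = height A (meetIdx A B) := meetIdx_spec hne
    show (IsDyck n (swapA A B (meetIdx A B)) ∧
        IsDyck (n + 2) (swapB A B (meetIdx A B))) ∧
      meetIdx (swapA A B (meetIdx A B)) (swapB A B (meetIdx A B)) ≤ 2 * n
    refine ⟨⟨swapA_isDyck (a := n + 1) (c := n) hA hB hm (by omega) hle,
      swapB_isDyck (a := n + 1) (c := n) hA hB hm (by omega) hle⟩, ?_⟩
    show meetIdx (swapA A B (meetIdx A B)) (swapB A B (meetIdx A B)) ≤ 2 * n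
    rw [meetIdx_swap hne (by rw [hA.len]; omega) (by rw [hB.len]; omega)]
    exact hle
  have hinv : Set.InvOn phi phi (Xset n) (Vset n) := by
    constructor
    · rintro ⟨C, D⟩ ⟨⟨hC, hD⟩, hle⟩
      replace hle : meetIdx C D ≤ 2 * n := hle
      have hne : (meetSet C D).Nonempty := ⟨_, meetSet_nonempty hC hD⟩
      have h1 : meetIdx C D ≤ C.length := by rw [hC.len]; omega
      have h2 : meetIdx C D + 2 ≤ D.length := by rw [hD.len]; omega
      show phi (phi (C, D)) = (C, D)
      unfold phi
      simp only
      rw [meetIdx_swap hne h1 h2, swap_swap_left h1 h2, swap_swap_right h1 h2]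
    · rintro ⟨A, B⟩ ⟨hA, hB⟩
      obtain ⟨hle, hne⟩ := meetIdx_le_of_V hA hB
      replace hle : meetIdx A B ≤ 2 * n := hle
      replace hne : (meetSet A B).Nonempty := hne
      have h1 : meetIdx A B ≤ A.length := by rw [hA.len]; omega
      have h2 : meetIdx A B + 2 ≤ B.length := by rw [hB.len]; omega
      show phi (phi (A, B)) = (A, B)
      unfold phi
      simp only
      rw [meetIdx_swap hne h1 h2, swap_swap_left h1 h2, swap_swap_right h1 h2]
  exact hinv.bijOn hmapsXV hmapsVX

end Bij

/-- The number of non-crossing pairs of Dyck paths of length `2n` (`P` weakly below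
`Q` at every abscissa) is `C_n C_{n+2} - C_{n+1}²`. -/
theorem count_noncrossing_dyck_pairs (n : ℕ) :
    ({PQ : List Bool × List Bool |
        IsDyck n PQ.1 ∧ IsDyck n PQ.2 ∧
        ∀ x : ℕ, x ≤ 2 * n → height PQ.1 x ≤ height PQ.2 x}.ncard : ℤ) =
      (catalan n : ℤ) * (catalan (n+2)) - (catalan (n+1))^2 := by
  set S : Set (List Bool × List Bool) :=
    {PQ | IsDyck n PQ.1 ∧ IsDyck n PQ.2 ∧
      ∀ x : ℕ, x ≤ 2 * n → height PQ.1 x ≤ height PQ.2 x} with hS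
  set T : Set (List Bool × List Bool) :=
    {p | (IsDyck n p.1 ∧ IsDyck (n + 2) p.2) ∧
      ∀ x ≤ 2 * n, height p.1 x + 2 ≤ height p.2 (x + 2)} with hT
  set f : List Bool × List Bool → List Bool × List Bool := fun p => (p.1, embed p.2) with hf
  -- Step 1: f maps S bijectively onto T
  have himg : f '' S = T := by
    ext ⟨C, D⟩
    constructor
    · rintro ⟨⟨P, Q⟩, ⟨hP, hQ, hcross⟩, hfeq⟩
      obtain ⟨rfl, rfl⟩ : P = C ∧ embed Q = D := by
        constructor <;> [exact congrArg Prod.fst hfeq; exact congrArg Prod.snd hfeq]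
      refine ⟨⟨hP, embed_isDyck hQ⟩, ?_⟩
      intro x hx
      show height P x + 2 ≤ height (embed Q) (x + 2)
      rw [height_embed_low hQ.len hx]
      have hc : height P x ≤ height (P, Q).2 x := hcross x hx
      omega
    · rintro ⟨⟨hC, hD⟩, hgap⟩
      obtain ⟨Q, hQ, hcross, hembed⟩ := surgery hC hD hgap
      exact ⟨(C, Q), ⟨hC, hQ, hcross⟩, by simp [hf, hembed]⟩
  have hinj : Set.InjOn f S := by
    rintro ⟨P, Q⟩ _ ⟨P', Q'⟩ _ h
    have h1 : P = P' := congrArg Prod.fst h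
    have h2 : embed Q = embed Q' := congrArg Prod.snd h
    rw [h1, embed_injective h2]
  have hST : S.ncard = T.ncard := by rw [← himg, Set.ncard_image_of_injOn hinj]
  -- Step 2: T = U \ X
  have hTUX : T = Uset n \ Xset n := by
    ext ⟨C, D⟩
    simp only [hT, Uset, Xset, Set.mem_setOf_eq, Set.mem_diff]
    constructor
    · rintro ⟨⟨hC, hD⟩, hgap⟩
      exact ⟨⟨hC, hD⟩, fun h => by
        have := (gap_iff hC hD).mp hgap
        omega⟩
    · rintro ⟨⟨hC, hD⟩, hnot⟩
      refine ⟨⟨hC, hD⟩, (gap_iff hC hD).mpr ?_⟩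
      by_contra h
      exact hnot ⟨⟨hC, hD⟩, by omega⟩
  -- Step 3: cardinalities
  have hXU : Xset n ⊆ Uset n := fun p hp => hp.1
  have hUfin : (Uset n).Finite := finite_dyckPairs n (n + 2)
  have hXfin : (Xset n).Finite := hUfin.subset hXU
  have hUcard : (Uset n).ncard = catalan n * catalan (n + 2) := ncard_dyckPairs n (n + 2)
  have hVcard : (Vset n).ncard = catalan (n + 1) * catalan (n + 1) :=
    ncard_dyckPairs (n + 1) (n + 1)
  have hXV : (Xset n).ncard = (Vset n).ncard := by
    rw [← (phi_bijOn n).image_eq, Set.ncard_image_of_injOn (phi_bijOn n).injOn]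
  have hXle : (Xset n).ncard ≤ (Uset n).ncard := Set.ncard_le_ncard hXU hUfin
  have hdiff : (Uset n \ Xset n).ncard = (Uset n).ncard - (Xset n).ncard :=
    Set.ncard_diff hXU hXfin
  rw [hST, hTUX, hdiff]
  rw [Nat.cast_sub hXle, hUcard, hXV, hVcard]
  push_cast
  ring
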